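/- arXiv:1709.00723 — 2 statements merged into one kernel-verified Lean document; each statement's English description precedes it below -/
import Mathlib

section
/- Let δ ∈ (0, π), let s, t ∈ [0, ∞), and let λ ∈ ℂ be nonzero with |arg λ| ≤ π − δ. Then |s·λ + t| ≥ sin(δ/2)·(s·|λ| + t). -/
/-- Let `δ ∈ (0, π)`, `s, t ∈ [0, ∞)`, and let `λ ∈ ℂ` be nonzero with
`|arg λ| ≤ π − δ`. Then `|s·λ + t| ≥ sin(δ/2)·(s·|λ| + t)`. -/
theorem elementary_sector_inequality
    (δ : ℝ) (hδ : δ ∈ Set.Ioo (0 : ℝ) Real.pi)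
    (s t : ℝ) (hs : 0 ≤ s) (ht : 0 ≤ t)
    (lam : ℂ) (hlam : lam ≠ 0) (harg : |lam.arg| ≤ Real.pi - δ) :
    Real.sin (δ / 2) * (s * ‖lam‖ + t)
      ≤ ‖(s : ℂ) * lam + (t : ℂ)‖ := by
  obtain ⟨hδ0, hδπ⟩ := hδ
  set r := ‖lam‖ with hr_def
  have hr : 0 ≤ r := norm_nonneg lam
  have hrne : r ≠ 0 := norm_ne_zero_iff.mpr hlam
  have hre : lam.re = r * Real.cos lam.arg := by
    rw [Complex.cos_arg hlam]
    field_simp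
    rfl
  -- cos bound
  have habsle : |lam.arg| ≤ Real.pi := le_trans harg (by linarith)
  have hcos : Real.cos (Real.pi - δ) ≤ Real.cos lam.arg := by
    rw [← Real.cos_abs lam.arg]
    exact Real.cos_le_cos_of_nonneg_of_le_pi (abs_nonneg _) (by linarith) harg
  have hsinsq : Real.sin (δ / 2) ^ 2 = (1 - Real.cos δ) / 2 := by
    have h1 := Real.cos_sq (δ / 2)
    have h2 := Real.sin_sq (δ / 2)
    rw [show 2 * (δ / 2) = δ by ring] at h1
    linarith
  have hcos2 : 2 * Real.sin (δ / 2) ^ 2 - 1 ≤ Real.cos lam.arg := by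
    rw [Real.cos_pi_sub] at hcos
    nlinarith [hsinsq]
  have hS0 : 0 ≤ Real.sin (δ / 2) :=
    Real.sin_nonneg_of_nonneg_of_le_pi (by linarith) (by linarith [Real.pi_pos])
  have hS1 : Real.sin (δ / 2) ≤ 1 := Real.sin_le_one _
  -- squared modulus
  have hsq : (‖(s : ℂ) * lam + (t : ℂ)‖) ^ 2
      = s ^ 2 * r ^ 2 + 2 * s * t * lam.re + t ^ 2 := by
    have h1 : lam.re ^ 2 + lam.im ^ 2 = r ^ 2 := by
      have := Complex.sq_norm lam
      rw [Complex.normSq_apply] at this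
      nlinarith [this]
    rw [Complex.sq_norm, Complex.normSq_apply]
    simp only [Complex.add_re, Complex.add_im, Complex.mul_re, Complex.mul_im,
      Complex.ofReal_re, Complex.ofReal_im]
    nlinarith [h1]
  have key : (Real.sin (δ / 2) * (s * r + t)) ^ 2
      ≤ (‖(s : ℂ) * lam + (t : ℂ)‖) ^ 2 := by
    rw [hsq, hre]
    have hst : 0 ≤ 2 * s * t * r := by positivity
    have := mul_le_mul_of_nonneg_left hcos2 hst
    have hq1 : Real.sin (δ / 2) ^ 2 ≤ 1 := by nlinarith
    have h3 : Real.sin (δ / 2) ^ 2 * (s * r - t) ^ 2 ≤ (s * r - t) ^ 2 :=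
      mul_le_of_le_one_left (sq_nonneg _) hq1
    nlinarith [this, h3]
  have hL : 0 ≤ Real.sin (δ / 2) * (s * r + t) := by positivity
  exact le_of_pow_le_pow_left₀ two_ne_zero (norm_nonneg _) key
end

section
/- Assume that b satisfies the inf-sup condition: there is β₁ > 0 with sup over 0 ≠ v ∈ V of |b(v,q)|/‖v‖_V ≥ β₁‖q‖_Q for all q ∈ Q. Let u₀ ∈ H_σ, and let (u¹,p¹) and (u²,p²) be two solutions of the abstract non-stationary Stokes problem with the same initial value u₀. Then u¹(t) = u²(t) for all t ≥ 0, and p¹(t) = p²(t) for all t > 0. -/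
local notation "⟪" x ", " y "⟫" => @inner ℂ _ _ x y

/-- If `b` satisfies the inf-sup condition with constant `β₁ > 0`, then two
solutions of the abstract non-stationary Stokes problem with the same initial value `u₀ ∈ H_σ`
coincide: `u¹(t) = u²(t)` for all `t ≥ 0` and `p¹(t) = p²(t)` for all `t > 0`. -/
theorem abstract_stokes_uniqueness
    {H V Q : Type*}
    [NormedAddCommGroup H] [InnerProductSpace ℂ H] [CompleteSpace H]
    [NormedAddCommGroup V] [InnerProductSpace ℂ V] [CompleteSpace V]
    [NormedAddCommGroup Q] [InnerProductSpace ℂ Q] [CompleteSpace Q]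
    (ι : V →L[ℂ] H) (hι_inj : Function.Injective ι) (hι_dense : DenseRange ι)
    (c : ℝ) (hc : 0 < c) (hιb : ∀ v : V, ‖ι v‖ ≤ c * ‖v‖)
    (a : V → V → ℂ) (Ca : ℝ)
    (ha_lin : ∀ u : V, IsLinearMap ℂ (a u))
    (ha_herm : ∀ u v : V, a u v = starRingEnd ℂ (a v u))
    (ha_bdd : ∀ u v : V, ‖a u v‖ ≤ Ca * ‖u‖ * ‖v‖)
    (α : ℝ) (hα : 0 < α)
    (ha_coer : ∀ v : V, α * ‖v‖ ^ 2 ≤ (a v v).re)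
    (b : V → Q → ℂ) (Cb : ℝ)
    (hb_linV : ∀ q : Q, IsLinearMap ℂ fun v => b v q)
    (hb_add : ∀ (v : V) (q q' : Q), b v (q + q') = b v q + b v q')
    (hb_smul : ∀ (v : V) (s : ℂ) (q : Q), b v (s • q) = starRingEnd ℂ s * b v q)
    (hb_bdd : ∀ (v : V) (q : Q), ‖b v q‖ ≤ Cb * ‖v‖ * ‖q‖)
    (β₁ : ℝ) (hβ₁ : 0 < β₁)
    (hb_infsup : ∀ q : Q, β₁ * ‖q‖ ≤ ⨆ v : V, ‖b v q‖ / ‖v‖)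
    (u₀ : H) (hu₀ : u₀ ∈ closure ((ι : V → H) '' {v' : V | ∀ q : Q, b v' q = 0}))
    (u₁ : ℝ → H) (uV₁ : ℝ → V) (ut₁ : ℝ → H) (p₁ : ℝ → Q)
    (u₂ : ℝ → H) (uV₂ : ℝ → V) (ut₂ : ℝ → H) (p₂ : ℝ → Q)
    (hu₁c : ContinuousOn u₁ (Set.Ici 0)) (hu₁0 : u₁ 0 = u₀)
    (hu₁V : ∀ t : ℝ, 0 < t → ι (uV₁ t) = u₁ t)
    (hu₁d : ∀ t : ℝ, 0 < t → HasDerivAt u₁ (ut₁ t) t)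
    (heq₁ : ∀ t : ℝ, 0 < t → ∀ v : V, ⟪ut₁ t, ι v⟫ + a (uV₁ t) v + b v (p₁ t) = 0)
    (hσ₁ : ∀ t : ℝ, 0 < t → ∀ q : Q, b (uV₁ t) q = 0)
    (hu₂c : ContinuousOn u₂ (Set.Ici 0)) (hu₂0 : u₂ 0 = u₀)
    (hu₂V : ∀ t : ℝ, 0 < t → ι (uV₂ t) = u₂ t)
    (hu₂d : ∀ t : ℝ, 0 < t → HasDerivAt u₂ (ut₂ t) t)
    (heq₂ : ∀ t : ℝ, 0 < t → ∀ v : V, ⟪ut₂ t, ι v⟫ + a (uV₂ t) v + b v (p₂ t) = 0)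
    (hσ₂ : ∀ t : ℝ, 0 < t → ∀ q : Q, b (uV₂ t) q = 0) :
    (∀ t : ℝ, 0 ≤ t → u₁ t = u₂ t) ∧ (∀ t : ℝ, 0 < t → p₁ t = p₂ t) := by
  classical
  set w : ℝ → H := fun t => u₁ t - u₂ t with hw_def
  set φ : ℝ → ℝ := fun t => (⟪w t, w t⟫).re with hφ_def
  have hwc : ContinuousOn w (Set.Ici 0) := hu₁c.sub hu₂c
  have hφc : ContinuousOn φ (Set.Ici 0) :=
    Complex.continuous_re.comp_continuousOn (hwc.inner hwc)
  -- derivative info at positive times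
  have hkey : ∀ t : ℝ, 0 < t → ∃ d : ℝ, d ≤ 0 ∧ HasDerivAt φ d t := by
    intro t ht
    have hwd : HasDerivAt w (ut₁ t - ut₂ t) t := (hu₁d t ht).sub (hu₂d t ht)
    have hid : HasDerivAt (fun s => (⟪w s, w s⟫ : ℂ))
        (⟪w t, ut₁ t - ut₂ t⟫ + ⟪ut₁ t - ut₂ t, w t⟫) t := hwd.inner ℂ hwd
    have hre := (Complex.reCLM.hasFDerivAt).comp_hasDerivAt t hid
    have hre' : HasDerivAt φ (⟪w t, ut₁ t - ut₂ t⟫ + ⟪ut₁ t - ut₂ t, w t⟫).re t := hre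
    refine ⟨_, ?_, hre'⟩
    -- compute the derivative value
    set v : V := uV₁ t - uV₂ t with hv_def
    have hbv : ∀ q : Q, b v q = 0 := by
      intro q
      have := (hb_linV q).map_sub (uV₁ t) (uV₂ t)
      simp only [hv_def, this, hσ₁ t ht q, hσ₂ t ht q, sub_zero]
    have hιv : ι v = w t := by
      simp [hv_def, map_sub, hu₁V t ht, hu₂V t ht, hw_def]
    have e₁ : ⟪ut₁ t, ι v⟫ + a (uV₁ t) v = 0 := by
      have := heq₁ t ht v; rw [hbv (p₁ t)] at this; simpa using this
    have e₂ : ⟪ut₂ t, ι v⟫ + a (uV₂ t) v = 0 := by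
      have := heq₂ t ht v; rw [hbv (p₂ t)] at this; simpa using this
    have ha_sub : a v v = a (uV₁ t) v - a (uV₂ t) v := by
      rw [hv_def, ha_herm (uV₁ t - uV₂ t) v, (ha_lin v).map_sub, map_sub,
        ← ha_herm (uV₁ t) v, ← ha_herm (uV₂ t) v]
    have hz : ⟪ut₁ t - ut₂ t, w t⟫ = -(a v v) := by
      rw [← hιv, inner_sub_left, ha_sub]
      have h1 : ⟪ut₁ t, ι v⟫ = -(a (uV₁ t) v) := by linear_combination e₁
      have h2 : ⟪ut₂ t, ι v⟫ = -(a (uV₂ t) v) := by linear_combination e₂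
      rw [h1, h2]; ring
    have hzre : (⟪ut₁ t - ut₂ t, w t⟫).re ≤ 0 := by
      rw [hz]
      have h1 := ha_coer v
      have h2 : (0:ℝ) ≤ α * ‖v‖ ^ 2 := by positivity
      simp only [Complex.neg_re]
      linarith
    have hconj : (⟪w t, ut₁ t - ut₂ t⟫).re = (⟪ut₁ t - ut₂ t, w t⟫).re := by
      have h := inner_re_symm (𝕜 := ℂ) (w t) (ut₁ t - ut₂ t)
      exact h
    simp only [Complex.add_re, hconj]
    linarith
  -- φ is antitone on [0, ∞)
  have hderiv : ∀ t ∈ interior (Set.Ici (0:ℝ)), deriv φ t ≤ 0 := by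
    intro t ht
    rw [interior_Ici] at ht
    obtain ⟨d, hd, hdd⟩ := hkey t ht
    rw [hdd.deriv]; exact hd
  have hdiff : DifferentiableOn ℝ φ (interior (Set.Ici (0:ℝ))) := by
    intro t ht
    rw [interior_Ici] at ht
    obtain ⟨d, _, hdd⟩ := hkey t ht
    exact hdd.differentiableAt.differentiableWithinAt
  have hanti : AntitoneOn φ (Set.Ici 0) :=
    antitoneOn_of_deriv_nonpos (convex_Ici 0) hφc hdiff hderiv
  have hφ0 : φ 0 = 0 := by simp [hφ_def, hw_def, hu₁0, hu₂0]
  have hφsq : ∀ t : ℝ, φ t = ‖w t‖ ^ 2 := by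
    intro t
    have := inner_self_eq_norm_sq (𝕜 := ℂ) (w t)
    exact this
  have huu : ∀ t : ℝ, 0 ≤ t → u₁ t = u₂ t := by
    intro t ht
    have h1 : φ t ≤ φ 0 := hanti (Set.self_mem_Ici) ht ht
    have h2 : 0 ≤ φ t := by rw [hφsq]; positivity
    have h3 : φ t = 0 := le_antisymm (hφ0 ▸ h1) h2
    have : ‖w t‖ ^ 2 = 0 := by rw [← hφsq]; exact h3
    have hw0 : w t = 0 := by
      have := pow_eq_zero_iff (n := 2) (by norm_num) |>.mp this
      exact norm_eq_zero.mp this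
    have : u₁ t - u₂ t = 0 := hw0
    exact sub_eq_zero.mp this
  refine ⟨huu, ?_⟩
  intro t ht
  -- velocities agree in V
  have hVeq : uV₁ t = uV₂ t := by
    apply hι_inj
    rw [hu₁V t ht, hu₂V t ht, huu t ht.le]
  -- time derivatives agree
  have hteq : ut₁ t = ut₂ t := by
    have hwd : HasDerivAt w (ut₁ t - ut₂ t) t := (hu₁d t ht).sub (hu₂d t ht)
    have hev : (fun _ : ℝ => (0:H)) =ᶠ[nhds t] w := by
      filter_upwards [Ioi_mem_nhds ht] with s hs
      have : u₁ s = u₂ s := huu s (le_of_lt hs)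
      simp [hw_def, this]
    have h0 : HasDerivAt (fun _ : ℝ => (0:H)) (ut₁ t - ut₂ t) t :=
      hwd.congr_of_eventuallyEq hev
    have := h0.unique (hasDerivAt_const t 0)
    exact sub_eq_zero.mp this
  -- pressure difference annihilated by b
  set q : Q := p₁ t - p₂ t with hq_def
  have hbq : ∀ v : V, b v q = 0 := by
    intro v
    have h1 := heq₁ t ht v
    have h2 := heq₂ t ht v
    rw [hVeq, hteq] at h1
    have hbd : b v (p₁ t) = b v (p₂ t) := by linear_combination h1 - h2
    have : q = p₁ t + (-1 : ℂ) • p₂ t := by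
      rw [hq_def]; simp [sub_eq_add_neg]
    rw [this, hb_add, hb_smul, hbd]
    simp
  have hsup : (⨆ v : V, ‖b v q‖ / ‖v‖) = 0 := by
    have h : ∀ v : V, ‖b v q‖ / ‖v‖ = 0 := by
      intro v; rw [hbq v]; simp
    simp only [h]
    exact ciSup_const
  have := hb_infsup q
  rw [hsup] at this
  have hq0 : ‖q‖ = 0 := by
    nlinarith [norm_nonneg q]
  exact sub_eq_zero.mp (norm_eq_zero.mp hq0)
end
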